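/- For every short game G, the misère outcome of G + G° is P (the second player to move wins G + G° under misère play), where G° is the adjoint of G. -/

import Mathlib

namespace SetTheory

universe u

/-- Pre-games, as in the older Mathlib (`SetTheory.PGame`, since removed). -/
inductive PGame : Type (u + 1)
  | mk : ∀ α β : Type u, (α → PGame) → (β → PGame) → PGame

namespace PGame

def LeftMoves : PGame → Type u
  | mk l _ _ _ => l

def RightMoves : PGame → Type u
  | mk _ r _ _ => r

def moveLeft : ∀ g : PGame, LeftMoves g → PGame
  | mk _l _ L _ => L

def moveRight : ∀ g : PGame, RightMoves g → PGame
  | mk _ _r _ R => R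

inductive IsOption : PGame → PGame → Prop
  | moveLeft {x : PGame} (i : x.LeftMoves) : IsOption (x.moveLeft i) x
  | moveRight {x : PGame} (i : x.RightMoves) : IsOption (x.moveRight i) x

instance : Zero PGame :=
  ⟨⟨PEmpty, PEmpty, PEmpty.elim, PEmpty.elim⟩⟩

def star : PGame.{u} :=
  ⟨PUnit, PUnit, fun _ => 0, fun _ => 0⟩

def neg : PGame → PGame
  | ⟨l, r, L, R⟩ => ⟨r, l, fun i => neg (R i), fun i => neg (L i)⟩

instance : Neg PGame :=
  ⟨neg⟩

noncomputable instance : Add PGame.{u} :=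
  ⟨fun x y => by
    induction x generalizing y with | mk xl xr _ _ IHxl IHxr => _
    induction y with | mk yl yr yL yR IHyl IHyr => _
    have y := mk yl yr yL yR
    refine ⟨xl ⊕ yl, xr ⊕ yr, Sum.rec ?_ ?_, Sum.rec ?_ ?_⟩
    · exact fun i => IHxl i y
    · exact IHyl
    · exact fun i => IHxr i y
    · exact IHyr⟩

def Identical : PGame.{u} → PGame.{u} → Prop
  | mk _ _ xL xR, mk _ _ yL yR =>
    Relator.BiTotal (fun i j => Identical (xL i) (yL j)) ∧
      Relator.BiTotal (fun i j => Identical (xR i) (yR j))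

noncomputable def birthday : PGame.{u} → Ordinal.{u}
  | ⟨_, _, xL, xR⟩ =>
    max (Ordinal.lsub.{u, u} fun i => birthday (xL i))
      (Ordinal.lsub.{u, u} fun i => birthday (xR i))

theorem birthday_moveLeft_lt {x : PGame} (i : x.LeftMoves) :
    (x.moveLeft i).birthday < x.birthday := by
  cases x; rw [birthday]; exact lt_max_of_lt_left (Ordinal.lt_lsub _ i)

theorem birthday_moveRight_lt {x : PGame} (i : x.RightMoves) :
    (x.moveRight i).birthday < x.birthday := by
  cases x; rw [birthday]; exact lt_max_of_lt_right (Ordinal.lt_lsub _ i)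

end PGame

end SetTheory

namespace SetTheory.PGame

theorem leftMoves_add (x y : PGame) : (x + y).LeftMoves = (x.LeftMoves ⊕ y.LeftMoves) := by
  cases x; cases y; rfl

theorem rightMoves_add (x y : PGame) : (x + y).RightMoves = (x.RightMoves ⊕ y.RightMoves) := by
  cases x; cases y; rfl

def toLeftMovesAdd {x y : PGame} : x.LeftMoves ⊕ y.LeftMoves ≃ (x + y).LeftMoves :=
  Equiv.cast (leftMoves_add x y).symm

def toRightMovesAdd {x y : PGame} : x.RightMoves ⊕ y.RightMoves ≃ (x + y).RightMoves :=
  Equiv.cast (rightMoves_add x y).symm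

theorem mk_add_moveLeft_inl {xl xr yl yr} {xL xR yL yR} {i} :
    (mk xl xr xL xR + mk yl yr yL yR).moveLeft (Sum.inl i) = (xL i) + mk yl yr yL yR := rfl

theorem mk_add_moveLeft_inr {xl xr yl yr} {xL xR yL yR} {i} :
    (mk xl xr xL xR + mk yl yr yL yR).moveLeft (Sum.inr i) = mk xl xr xL xR + (yL i) := rfl

theorem mk_add_moveRight_inl {xl xr yl yr} {xL xR yL yR} {i} :
    (mk xl xr xL xR + mk yl yr yL yR).moveRight (Sum.inl i) = (xR i) + mk yl yr yL yR := rfl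

theorem mk_add_moveRight_inr {xl xr yl yr} {xL xR yL yR} {i} :
    (mk xl xr xL xR + mk yl yr yL yR).moveRight (Sum.inr i) = mk xl xr xL xR + (yR i) := rfl

theorem add_moveLeft_inl {x y : PGame} {i} :
    (x + y).moveLeft (toLeftMovesAdd (Sum.inl i)) = x.moveLeft i + y := by
  cases x; cases y; rfl

theorem add_moveLeft_inr {x y : PGame} {i} :
    (x + y).moveLeft (toLeftMovesAdd (Sum.inr i)) = x + y.moveLeft i := by
  cases x; cases y; rfl

theorem add_moveRight_inl {x y : PGame} {i} :
    (x + y).moveRight (toRightMovesAdd (Sum.inl i)) = x.moveRight i + y := by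
  cases x; cases y; rfl

theorem add_moveRight_inr {x y : PGame} {i} :
    (x + y).moveRight (toRightMovesAdd (Sum.inr i)) = x + y.moveRight i := by
  cases x; cases y; rfl

end SetTheory.PGame

open SetTheory PGame

namespace MisereDicot

def Follower (G' G : PGame) : Prop := Relation.ReflTransGen PGame.IsOption G' G

def IsShort (G : PGame) : Prop :=
  ∀ G', Follower G' G → Finite G'.LeftMoves ∧ Finite G'.RightMoves

def Dicot (G : PGame) : Prop :=
  ∀ G', Follower G' G → (IsEmpty G'.LeftMoves ↔ IsEmpty G'.RightMoves)

mutual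
def LeftWinsFirst (G : PGame) : Prop :=
  IsEmpty G.LeftMoves ∨ ∃ i, ¬ RightWinsFirst (G.moveLeft i)
termination_by G.birthday
decreasing_by exact PGame.birthday_moveLeft_lt i

def RightWinsFirst (G : PGame) : Prop :=
  IsEmpty G.RightMoves ∨ ∃ j, ¬ LeftWinsFirst (G.moveRight j)
termination_by G.birthday
decreasing_by exact PGame.birthday_moveRight_lt j
end

inductive MOutcome : Type
  | L | N | P | R
deriving DecidableEq

instance : LE MOutcome := ⟨fun a b => a = b ∨ a = .R ∨ b = .L⟩

noncomputable def outcome (G : PGame) : MOutcome := by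
  classical
  exact if LeftWinsFirst G then (if RightWinsFirst G then .N else .L)
        else (if RightWinsFirst G then .R else .P)

def Dge (G H : PGame) : Prop :=
  ∀ X : PGame, IsShort X → Dicot X → outcome (H + X) ≤ outcome (G + X)

def Deq (G H : PGame) : Prop :=
  ∀ X : PGame, IsShort X → Dicot X → outcome (G + X) = outcome (H + X)

def Dgt (G H : PGame) : Prop := Dge G H ∧ ¬ Deq G H

def DInvertible (G : PGame) : Prop :=
  ∃ H : PGame, IsShort H ∧ Dicot H ∧ Deq (G + H) 0

/-- The left option `G^L_i` is reversible through its right option `(G^L_i)^R_j ≼ G`. -/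
def LeftReversibleAt (G : PGame) (i : G.LeftMoves) (j : (G.moveLeft i).RightMoves) : Prop :=
  Dge G ((G.moveLeft i).moveRight j)

def RightReversibleAt (G : PGame) (j : G.RightMoves) (i : (G.moveRight j).LeftMoves) : Prop :=
  Dge ((G.moveRight j).moveLeft i) G

/-- `G` has a dominated left option (removable by the Domination theorem). -/
def LeftDominated (G : PGame) : Prop :=
  ∃ i i' : G.LeftMoves, ¬ (G.moveLeft i).Identical (G.moveLeft i') ∧
    Dge (G.moveLeft i') (G.moveLeft i)

def RightDominated (G : PGame) : Prop :=
  ∃ j j' : G.RightMoves, ¬ (G.moveRight j).Identical (G.moveRight j') ∧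
    Dge (G.moveRight j) (G.moveRight j')

/-- `G` has a non-atomic reversible left option (bypassable). -/
def LeftNonAtomicReversible (G : PGame) : Prop :=
  ∃ i j, LeftReversibleAt G i j ∧ Nonempty ((G.moveLeft i).moveRight j).LeftMoves

def RightNonAtomicReversible (G : PGame) : Prop :=
  ∃ j i, RightReversibleAt G j i ∧ Nonempty ((G.moveRight j).moveLeft i).RightMoves

/-- `G` has an atomic-reversible left option to which the atomic-reversibility
replacement applies nontrivially (i.e. changing the set of options): either some
other left option is a winning first move for Left (so the option is removable),
or the option is not already `*`. -/
def LeftAtomicReducible (G : PGame) : Prop :=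
  ∃ i j, LeftReversibleAt G i j ∧ IsEmpty ((G.moveLeft i).moveRight j).LeftMoves ∧
    ((∃ i', ¬ (G.moveLeft i').Identical (G.moveLeft i) ∧ ¬ RightWinsFirst (G.moveLeft i')) ∨
      ¬ (G.moveLeft i).Identical star)

def RightAtomicReducible (G : PGame) : Prop :=
  ∃ j i, RightReversibleAt G j i ∧ IsEmpty ((G.moveRight j).moveLeft i).RightMoves ∧
    ((∃ j', ¬ (G.moveRight j').Identical (G.moveRight j) ∧ ¬ LeftWinsFirst (G.moveRight j')) ∨
      ¬ (G.moveRight j).Identical star)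

/-- The Substitution theorem applies to `G`: `G = {A | C}` with `A` an
atomic-reversible left option and `C` an atomic-reversible right option. -/
def SubstitutionReducible (G : PGame) : Prop :=
  (∀ i i' : G.LeftMoves, (G.moveLeft i).Identical (G.moveLeft i')) ∧
  (∀ j j' : G.RightMoves, (G.moveRight j).Identical (G.moveRight j')) ∧
  (∃ i j, LeftReversibleAt G i j ∧ IsEmpty ((G.moveLeft i).moveRight j).LeftMoves) ∧
  (∃ j i, RightReversibleAt G j i ∧ IsEmpty ((G.moveRight j).moveLeft i).RightMoves)

/-- `G` is in canonical form: no follower admits any of the misère-dicot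
simplifications (domination, non-atomic reversibility, atomic reversibility,
substitution) producing an equivalent game with a different set of options. -/
def CanonicalForm (G : PGame) : Prop :=
  ∀ G', Follower G' G →
    ¬ (LeftDominated G' ∨ RightDominated G' ∨
       LeftNonAtomicReversible G' ∨ RightNonAtomicReversible G' ∨
       LeftAtomicReducible G' ∨ RightAtomicReducible G' ∨
       SubstitutionReducible G')

/-- The game `*2 = {0, * | 0, *}`. -/
def star2 : PGame :=
  PGame.mk Bool Bool (fun b => cond b star 0) (fun b => cond b star 0)

open Classical in
/-- The adjoint `G°` of `G`. -/
noncomputable def adjoint : PGame → PGame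
  | PGame.mk l r L R =>
    if IsEmpty l ∧ IsEmpty r then star
    else if IsEmpty l then PGame.mk r PUnit (fun j => adjoint (R j)) (fun _ => 0)
    else if IsEmpty r then PGame.mk PUnit l (fun _ => 0) (fun i => adjoint (L i))
    else PGame.mk r l (fun j => adjoint (R j)) (fun i => adjoint (L i))

/-- A universe of short games: a class closed under taking options, disjunctive
sums and conjugates. -/
structure GameUniverse where
  mem : PGame → Prop
  short_mem : ∀ G, mem G → IsShort G
  isOption_mem : ∀ G G', mem G → PGame.IsOption G' G → mem G'
  add_mem : ∀ G H, mem G → mem H → mem (G + H)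
  neg_mem : ∀ G, mem G → mem (-G)

/-- `G ≽ H` modulo the universe `U`. -/
def UGe (U : GameUniverse) (G H : PGame) : Prop :=
  ∀ X : PGame, U.mem X → outcome (H + X) ≤ outcome (G + X)

/-- `G = H` modulo the universe `U`. -/
def UEq (U : GameUniverse) (G H : PGame) : Prop :=
  ∀ X : PGame, U.mem X → outcome (G + X) = outcome (H + X)

/-- `G ≻ H` modulo the universe `U`. -/
def UGt (U : GameUniverse) (G H : PGame) : Prop := UGe U G H ∧ ¬ UEq U G H

/-- `J` is invertible in the universe `U`. -/
def UInvertible (U : GameUniverse) (J : PGame) : Prop :=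
  ∃ J' : PGame, U.mem J' ∧ UEq U (J + J') 0


private lemma lwf_iff (X : PGame) :
    LeftWinsFirst X ↔ (IsEmpty X.LeftMoves ∨ ∃ i, ¬ RightWinsFirst (X.moveLeft i)) := by
  rw [LeftWinsFirst]

private lemma rwf_iff (X : PGame) :
    RightWinsFirst X ↔ (IsEmpty X.RightMoves ∨ ∃ j, ¬ LeftWinsFirst (X.moveRight j)) := by
  rw [RightWinsFirst]

private lemma rwf_of_move (X : PGame) (j : X.RightMoves)
    (h : ¬ LeftWinsFirst (X.moveRight j)) : RightWinsFirst X :=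
  (rwf_iff X).mpr (Or.inr ⟨j, h⟩)

private lemma lwf_of_move (X : PGame) (i : X.LeftMoves)
    (h : ¬ RightWinsFirst (X.moveLeft i)) : LeftWinsFirst X :=
  (lwf_iff X).mpr (Or.inr ⟨i, h⟩)

theorem adjoint_P : ∀ (G : PGame),
    ¬ LeftWinsFirst (G + adjoint G) ∧ ¬ RightWinsFirst (G + adjoint G)
  | PGame.mk l r L R => by
    have IHL : ∀ i, ¬ LeftWinsFirst (L i + adjoint (L i)) ∧
        ¬ RightWinsFirst (L i + adjoint (L i)) := fun i => adjoint_P (L i)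
    have IHR : ∀ j, ¬ LeftWinsFirst (R j + adjoint (R j)) ∧
        ¬ RightWinsFirst (R j + adjoint (R j)) := fun j => adjoint_P (R j)
    rw [adjoint]
    by_cases hl : IsEmpty l <;> by_cases hr : IsEmpty r
    · -- G has no options; adjoint = star
      rw [if_pos ⟨hl, hr⟩]
      constructor
      · intro h
        rcases (lwf_iff _).mp h with he | ⟨i, hi⟩
        · exact he.elim (Sum.inr PUnit.unit)
        · apply hi
          obtain (i | i) := i
          · exact hl.elim i
          · rw [rwf_iff]
            refine Or.inl ?_
            exact isEmpty_sum.mpr ⟨hr, by infer_instance⟩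
      · intro h
        rcases (rwf_iff _).mp h with he | ⟨j, hj⟩
        · exact he.elim (Sum.inr PUnit.unit)
        · apply hj
          obtain (j | j) := j
          · exact hr.elim j
          · rw [lwf_iff]
            refine Or.inl ?_
            exact isEmpty_sum.mpr ⟨hl, by infer_instance⟩
    · -- l empty, r nonempty
      rw [if_neg (by tauto), if_pos hl]
      constructor
      · intro h
        rcases (lwf_iff _).mp h with he | ⟨i, hi⟩
        · obtain ⟨k⟩ := not_isEmpty_iff.mp hr
          exact he.elim (Sum.inr k)
        · apply hi
          obtain (i | k) := i
          · exact hl.elim i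
          · rw [PGame.mk_add_moveLeft_inr]
            exact rwf_of_move _ (PGame.toRightMovesAdd (Sum.inl k))
              (by erw [PGame.add_moveRight_inl]; exact (IHR k).1)
      · intro h
        rcases (rwf_iff _).mp h with he | ⟨j, hj⟩
        · exact he.elim (Sum.inr PUnit.unit)
        · apply hj
          obtain (k | j) := j
          · rw [PGame.mk_add_moveRight_inl]
            exact lwf_of_move _ (PGame.toLeftMovesAdd (Sum.inr k))
              (by erw [PGame.add_moveLeft_inr]; exact (IHR k).2)
          · rw [PGame.mk_add_moveRight_inr]
            rw [lwf_iff]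
            refine Or.inl ?_
            exact isEmpty_sum.mpr ⟨hl, by infer_instance⟩
    · -- l nonempty, r empty
      rw [if_neg (by tauto), if_neg hl, if_pos hr]
      constructor
      · intro h
        rcases (lwf_iff _).mp h with he | ⟨i, hi⟩
        · exact he.elim (Sum.inr PUnit.unit)
        · apply hi
          obtain (i | u) := i
          · rw [PGame.mk_add_moveLeft_inl]
            exact rwf_of_move _ (PGame.toRightMovesAdd (Sum.inr i))
              (by erw [PGame.add_moveRight_inr]; exact (IHL i).1)
          · rw [PGame.mk_add_moveLeft_inr]
            rw [rwf_iff]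
            refine Or.inl ?_
            exact isEmpty_sum.mpr ⟨hr, by infer_instance⟩
      · intro h
        rcases (rwf_iff _).mp h with he | ⟨j, hj⟩
        · obtain ⟨i⟩ := not_isEmpty_iff.mp hl
          exact he.elim (Sum.inr i)
        · apply hj
          obtain (j | i) := j
          · exact hr.elim j
          · rw [PGame.mk_add_moveRight_inr]
            exact lwf_of_move _ (PGame.toLeftMovesAdd (Sum.inl i))
              (by erw [PGame.add_moveLeft_inl]; exact (IHL i).2)
    · -- both nonempty
      rw [if_neg (by tauto), if_neg hl, if_neg hr]
      constructor
      · intro h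
        rcases (lwf_iff _).mp h with he | ⟨i, hi⟩
        · obtain ⟨k⟩ := not_isEmpty_iff.mp hr
          exact he.elim (Sum.inr k)
        · apply hi
          obtain (i | k) := i
          · rw [PGame.mk_add_moveLeft_inl]
            exact rwf_of_move _ (PGame.toRightMovesAdd (Sum.inr i))
              (by erw [PGame.add_moveRight_inr]; exact (IHL i).1)
          · rw [PGame.mk_add_moveLeft_inr]
            exact rwf_of_move _ (PGame.toRightMovesAdd (Sum.inl k))
              (by erw [PGame.add_moveRight_inl]; exact (IHR k).1)
      · intro h
        rcases (rwf_iff _).mp h with he | ⟨j, hj⟩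
        · obtain ⟨i⟩ := not_isEmpty_iff.mp hl
          exact he.elim (Sum.inr i)
        · apply hj
          obtain (j | i) := j
          · rw [PGame.mk_add_moveRight_inl]
            exact lwf_of_move _ (PGame.toLeftMovesAdd (Sum.inr j))
              (by erw [PGame.add_moveLeft_inr]; exact (IHR j).2)
          · rw [PGame.mk_add_moveRight_inr]
            exact lwf_of_move _ (PGame.toLeftMovesAdd (Sum.inl i))
              (by erw [PGame.add_moveLeft_inl]; exact (IHL i).2)
termination_by G => G.birthday
decreasing_by
  · exact PGame.birthday_moveLeft_lt (x := PGame.mk l r L R) i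
  · exact PGame.birthday_moveRight_lt (x := PGame.mk l r L R) j

/-- for every short game `G`, the misère outcome of `G + G°` is `P`,
where `G°` is the adjoint of `G`. -/
theorem stmt14 (G : PGame) (hs : IsShort G) :
    outcome (G + adjoint G) = MOutcome.P := by
  obtain ⟨h1, h2⟩ := adjoint_P G
  rw [outcome, if_neg h1, if_neg h2]

end MisereDicot
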